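/- For every integer k > 8, the Θ-graph-based subgraph H_k of the transmission graph G (containing, for each point p and each of the k cones F with apex p, the edge from the point of F_p with an edge to p minimizing d_F(p,·)) is a t-spanner of G for t = tan(π/4 + 2π/k): for every edge (u,p) of G there is a directed path from u to p in H_k of Euclidean length at most t·|up|. -/

import Mathlib

set_option maxHeartbeats 1000000


open Real

/-- The index of the cone (among `k` cones of opening angle `2π/k`
partitioning the plane) containing the direction of `z`. -/
noncomputable def coneIdx (k : ℕ) (z : ℂ) : ℤ :=
  ⌊(Complex.arg z + π) * k / (2 * π)⌋

/-- The direction angle of the bisector of the cone with index `c`. -/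
noncomputable def bisAngle (k : ℕ) (c : ℤ) : ℝ :=
  ((c : ℝ) + 1 / 2) * (2 * π / k) - π

/-- `dF k p q`: the (signed) distance from `p` to the orthogonal projection of `q`
onto the bisector of the cone with apex `p` containing `q`. -/
noncomputable def dF (k : ℕ) (p q : ℂ) : ℝ :=
  ((q - p) * Complex.exp (-(↑(bisAngle k (coneIdx k (q - p))) * Complex.I))).re

/-- The transmission-graph edge relation: `u → v` iff `|uv| ≤ r u`. -/
def TEdge (P : Finset ℂ) (r : ℂ → ℝ) (u v : ℂ) : Prop :=
  u ∈ P ∧ v ∈ P ∧ u ≠ v ∧ dist u v ≤ r u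

/-- Edges of the Θ-graph `H_k`: for each point `p` and each cone, keep only the
incoming edge from the point of the cone minimizing `dF`. -/
def ThetaEdge (k : ℕ) (P : Finset ℂ) (r : ℂ → ℝ) (u v : ℂ) : Prop :=
  TEdge P r u v ∧ ∀ q, TEdge P r q v → coneIdx k (q - v) = coneIdx k (u - v) →
    dF k v u ≤ dF k v q

/-- The Euclidean length of a path given as a list of vertices. -/
noncomputable def pathLen : List ℂ → ℝ
  | [] => 0
  | [_] => 0
  | a :: b :: l => dist a b + pathLen (b :: l)

lemma tan_aux (θ : ℝ) (h0 : 0 < θ) (h1 : θ < π/4) :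
    0 < Real.tan (π/4 - θ) ∧ Real.tan (π/4 - θ) * (1 + θ) ≤ 1 - θ := by
  have hπ := Real.pi_pos
  have hc : 0 < Real.cos θ := Real.cos_pos_of_mem_Ioo ⟨by linarith, by linarith⟩
  have hs : 0 ≤ Real.sin θ := Real.sin_nonneg_of_nonneg_of_le_pi (by linarith) (by linarith)
  have htan : θ * Real.cos θ < Real.sin θ := by
    have h2 : θ < Real.tan θ := Real.lt_tan h0 (by linarith)
    rw [Real.tan_eq_sin_div_cos, lt_div_iff₀ hc] at h2
    linarith
  constructor
  · exact Real.tan_pos_of_pos_of_lt_pi_div_two (by linarith) (by linarith)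
  · rw [Real.tan_eq_sin_div_cos, Real.sin_sub, Real.cos_sub, Real.sin_pi_div_four,
      Real.cos_pi_div_four]
    have hden : 0 < Real.sqrt 2 / 2 * Real.cos θ + Real.sqrt 2 / 2 * Real.sin θ := by
      have : (0:ℝ) < Real.sqrt 2 := by positivity
      nlinarith
    rw [div_mul_eq_mul_div, div_le_iff₀ hden]
    have h2 : (0:ℝ) < Real.sqrt 2 := by positivity
    nlinarith [htan, h2, hs, hc, mul_pos h0 hc]

lemma key_ineq (θ α β R ρ : ℝ) (hθ0 : 0 < θ) (hθ1 : θ < π/4)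
    (hα : |α| ≤ θ/2) (hβ : |β| ≤ θ/2) (hR : 0 < R) (hρ : 0 < ρ)
    (hproj : ρ * Real.cos β ≤ R * Real.cos α) :
    Real.sqrt (R^2 + ρ^2 - 2*R*ρ*Real.cos (α - β)) + Real.tan (π/4 - θ) * ρ ≤ R := by
  have hπ := Real.pi_pos
  have hπ4 : θ < (63/80 : ℝ) := by nlinarith [Real.pi_lt_d2]
  obtain ⟨hc0, hcM⟩ := tan_aux θ hθ0 hθ1
  set c := Real.tan (π/4 - θ) with hc
  have hc1 : c ≤ 1 := by nlinarith
  -- cosine bounds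
  have hαθ := abs_le.mp hα
  have hβθ := abs_le.mp hβ
  have hcosh : 1 - θ^2/8 ≤ Real.cos (θ/2) := by
    have := Real.one_sub_sq_div_two_le_cos (x := θ/2)
    nlinarith
  have hcosα : Real.cos (θ/2) ≤ Real.cos α := by
    rw [← Real.cos_abs α]
    exact Real.cos_le_cos_of_nonneg_of_le_pi (abs_nonneg _) (by linarith) hα
  have hcosβ : Real.cos (θ/2) ≤ Real.cos β := by
    rw [← Real.cos_abs β]
    exact Real.cos_le_cos_of_nonneg_of_le_pi (abs_nonneg _) (by linarith) hβ
  have hcosα1 : Real.cos α ≤ 1 := Real.cos_le_one α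
  have hcosβ1 : Real.cos β ≤ 1 := Real.cos_le_one β
  have hccosβ : c ≤ Real.cos β := by nlinarith
  have hcβpos : 0 < Real.cos β := by nlinarith
  -- product-to-sum
  have hpts : 2 * (Real.cos (α - β) * Real.cos β) = Real.cos α + Real.cos (α - 2*β) := by
    have e1 := Real.cos_add (α - β) β
    have e2 := Real.cos_sub (α - β) β
    have e3 : α - β + β = α := by ring
    have e4 : α - β - β = α - 2*β := by ring
    rw [e3] at e1; rw [e4] at e2
    linarith
  have hcos3 : 1 - 9*θ^2/8 ≤ Real.cos (α - 2*β) := by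
    have h5 := Real.one_sub_sq_div_two_le_cos (x := α - 2*β)
    nlinarith [sq_nonneg (α - 2*β)]
  -- main scalar inequality F : cos(α-2β) + c²·cosα - 2c·cosβ ≥ 0
  have hF : 0 ≤ Real.cos (α - 2*β) + c^2 * Real.cos α - 2*c*Real.cos β := by
    have h5 : 2*θ ≤ (1-c)*(1+θ) := by nlinarith
    have h5' : (2*θ)^2 ≤ ((1-c)*(1+θ))^2 := pow_le_pow_left₀ (by linarith) h5 2
    have h45 : (1+θ)^2 ≤ (16/5 : ℝ) := by nlinarith
    have h6 : 4*θ^2 ≤ (1-c)^2 * (16/5 : ℝ) := by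
      nlinarith [h5', mul_le_mul_of_nonneg_left h45 (sq_nonneg (1-c))]
    have hc2 : c^2 ≤ 1 := by nlinarith
    have hca : 1 - θ^2/8 ≤ Real.cos α := le_trans hcosh hcosα
    have hA : c^2 - θ^2/8 ≤ c^2 * Real.cos α := by
      nlinarith [mul_le_mul_of_nonneg_left hca (sq_nonneg c), sq_nonneg θ]
    have hB : 2*c*Real.cos β ≤ 2*c := by nlinarith
    nlinarith [hcos3, hA, hB, h6]
  -- quadratic bound
  have hRcρ : c*ρ ≤ R := by nlinarith
  have hmain : R^2 + ρ^2 - 2*R*ρ*Real.cos (α - β) ≤ (R - c*ρ)^2 := by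
    -- reduces to 2R(cos(α-β) - c) ≥ ρ(1-c²), multiply by cos β > 0
    have h1c2 : (0:ℝ) ≤ 1 - c^2 := by nlinarith
    have h7 : ρ * Real.cos β * (1 - c^2) ≤ R * Real.cos α * (1 - c^2) :=
      mul_le_mul_of_nonneg_right hproj h1c2
    have hptsR : 2 * (Real.cos (α - β) * Real.cos β) * R
        = (Real.cos α + Real.cos (α - 2*β)) * R := by rw [hpts]
    have h8 : ρ * (1 - c^2) * Real.cos β ≤ 2*R*(Real.cos (α-β) - c) * Real.cos β := by
      nlinarith [mul_nonneg hR.le hF, h7, hptsR]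
    have h9 : ρ * (1 - c^2) ≤ 2*R*(Real.cos (α-β) - c) := by
      have := le_of_mul_le_mul_right h8 hcβpos
      linarith
    nlinarith
  calc Real.sqrt (R^2 + ρ^2 - 2*R*ρ*Real.cos (α - β)) + c * ρ
      ≤ Real.sqrt ((R - c*ρ)^2) + c*ρ := by
        have := Real.sqrt_le_sqrt hmain
        linarith
    _ = (R - c*ρ) + c*ρ := by rw [Real.sqrt_sq (by linarith)]
    _ = R := by ring

lemma dF_eq (k : ℕ) (p q : ℂ) :
    dF k p q = ‖q - p‖ *
      Real.cos (Complex.arg (q - p) - bisAngle k (coneIdx k (q - p))) := by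
  set b := bisAngle k (coneIdx k (q - p)) with hb
  rw [dF, ← hb]
  conv_lhs => rw [← Complex.norm_mul_exp_arg_mul_I (q - p)]
  rw [mul_assoc, ← Complex.exp_add]
  have h1 : (Complex.arg (q - p) : ℂ) * Complex.I + -(↑b * Complex.I)
      = ↑(Complex.arg (q - p) - b) * Complex.I := by push_cast; ring
  rw [h1, Complex.re_ofReal_mul, Complex.exp_ofReal_mul_I_re]

lemma cone_angle (k : ℕ) (hk : 0 < k) (z : ℂ) :
    |Complex.arg z - bisAngle k (coneIdx k z)| ≤ π / k := by
  have hπ := Real.pi_pos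
  have hk' : (0:ℝ) < k := by exact_mod_cast hk
  have h1 : ((coneIdx k z : ℝ)) ≤ (Complex.arg z + π) * k / (2 * π) := Int.floor_le _
  have h2 : (Complex.arg z + π) * k / (2 * π) < coneIdx k z + 1 := Int.lt_floor_add_one _
  have h1' : (coneIdx k z : ℝ) * (2 * π) ≤ (Complex.arg z + π) * k := by
    rw [le_div_iff₀ (by positivity)] at h1; linarith
  have h2' : (Complex.arg z + π) * k < ((coneIdx k z : ℝ) + 1) * (2 * π) := by
    rw [div_lt_iff₀ (by positivity)] at h2; linarith
  have hbk : bisAngle k (coneIdx k z) * k = ((coneIdx k z : ℝ) + 1/2) * (2*π) - π * k := by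
    rw [bisAngle]; field_simp
  rw [abs_le]
  constructor
  · rw [show -(π/(k:ℝ)) = (-π)/k by ring, div_le_iff₀ hk']
    nlinarith [h1', hbk]
  · rw [le_div_iff₀ hk']
    nlinarith [h2', hbk]

lemma abs_sub_sq' (z w : ℂ) :
    (‖z - w‖)^2 = (‖z‖)^2 + (‖w‖)^2
      - 2 * (‖z‖) * (‖w‖) * Real.cos (Complex.arg z - Complex.arg w) := by
  have hre : (z * (starRingEnd ℂ) w).re
      = (‖z‖) * (‖w‖) * Real.cos (Complex.arg z - Complex.arg w) := by
    conv_lhs => rw [← Complex.norm_mul_exp_arg_mul_I z, ← Complex.norm_mul_exp_arg_mul_I w]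
    rw [map_mul]
    have h1 : (starRingEnd ℂ) ((‖w‖ : ℂ)) = (‖w‖ : ℂ) := Complex.conj_ofReal _
    have h2 : (starRingEnd ℂ) (Complex.exp (↑(Complex.arg w) * Complex.I))
        = Complex.exp (↑(-Complex.arg w) * Complex.I) := by
      rw [← Complex.exp_conj, map_mul, Complex.conj_ofReal, Complex.conj_I]
      push_cast
      ring_nf
    rw [h1, h2]
    have h3 : (‖z‖ : ℂ) * Complex.exp (↑(Complex.arg z) * Complex.I) *
        ((‖w‖ : ℂ) * Complex.exp (↑(-Complex.arg w) * Complex.I))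
        = ((‖z‖ * ‖w‖ : ℝ) : ℂ)
          * Complex.exp (↑(Complex.arg z - Complex.arg w) * Complex.I) := by
      rw [show (↑(Complex.arg z - Complex.arg w) : ℂ) * Complex.I
          = ↑(Complex.arg z) * Complex.I + ↑(-Complex.arg w) * Complex.I by push_cast; ring,
        Complex.exp_add]
      push_cast
      ring
    rw [h3, Complex.re_ofReal_mul, Complex.exp_ofReal_mul_I_re]
  have hns := Complex.normSq_sub z w
  rw [← Complex.sq_norm, ← Complex.sq_norm z, ← Complex.sq_norm w] at hns
  rw [hns, hre]
  ring

lemma step_geom (k : ℕ) (hk : 8 < k) (u v p : ℂ) (hu : u ≠ p) (hv : v ≠ p)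
    (hcone : coneIdx k (v - p) = coneIdx k (u - p))
    (hd : dF k p v ≤ dF k p u) :
    dist u v + Real.tan (π/4 - 2*π/k) * dist v p ≤ dist u p := by
  have hπ := Real.pi_pos
  have hk0 : 0 < k := by omega
  have hk' : (8:ℝ) < k := by exact_mod_cast hk
  set θ : ℝ := 2*π/k with hθ
  have hθ0 : 0 < θ := by positivity
  have hθ1 : θ < π/4 := by
    rw [hθ, div_lt_iff₀ (by positivity)]
    nlinarith
  set b := bisAngle k (coneIdx k (u - p)) with hb
  set α := Complex.arg (u - p) - b with hα
  set β := Complex.arg (v - p) - b with hβ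
  have hhalf : θ/2 = π/(k:ℝ) := by rw [hθ]; ring
  have hαb : |α| ≤ θ/2 := by
    have := cone_angle k hk0 (u - p)
    rw [hα, hb, hhalf]; exact this
  have hβb : |β| ≤ θ/2 := by
    have := cone_angle k hk0 (v - p)
    rw [hβ, hb, ← hcone, hhalf]; exact this
  set R := ‖u - p‖ with hR
  set ρ := ‖v - p‖ with hρ
  have hR0 : 0 < R := by
    rw [hR]; simpa [sub_eq_zero] using hu
  have hρ0 : 0 < ρ := by
    rw [hρ]; simpa [sub_eq_zero] using hv
  have hproj : ρ * Real.cos β ≤ R * Real.cos α := by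
    have h1 := dF_eq k p v
    have h2 := dF_eq k p u
    rw [hcone] at h1
    rw [h1, h2] at hd
    exact hd
  have hdist : dist u v = Real.sqrt (R^2 + ρ^2 - 2*R*ρ*Real.cos (α - β)) := by
    have h4 : u - v = (u - p) - (v - p) := by ring
    have h5 := abs_sub_sq' (u - p) (v - p)
    have h6 : Complex.arg (u - p) - Complex.arg (v - p) = α - β := by rw [hα, hβ]; ring
    rw [h6] at h5
    rw [Complex.dist_eq, h4, ← Real.sqrt_sq (norm_nonneg ((u-p) - (v-p))), h5]
  have hkey := key_ineq θ α β R ρ hθ0 hθ1 hαb hβb hR0 hρ0 hproj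
  have hvp : dist v p = ρ := by rw [Complex.dist_eq]
  have hup : dist u p = R := by rw [Complex.dist_eq]
  rw [hdist, hvp, hup]
  exact hkey

lemma pathLen_concat (p : ℂ) : ∀ (l : List ℂ) (v : ℂ), l.getLast? = some v →
    pathLen (l ++ [p]) = pathLen l + dist v p := by
  intro l
  induction l with
  | nil => intro v h; simp at h
  | cons x l ih =>
    intro v h
    cases l with
    | nil =>
      simp [List.getLast?] at h
      subst h
      simp [pathLen]
    | cons y l' =>
      have h' : (y :: l').getLast? = some v := by rwa [List.getLast?_cons_cons] at h
      have h2 := ih v h'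
      show pathLen (x :: ((y :: l') ++ [p])) = pathLen (x :: y :: l') + dist v p
      rw [List.cons_append]
      show dist x y + pathLen ((y :: l') ++ [p]) = (dist x y + pathLen (y :: l')) + dist v p
      rw [h2]; ring

lemma tan_facts (θ : ℝ) (h0 : 0 < θ) (h1 : θ < π/4) :
    Real.tan (π/4 + θ) * Real.tan (π/4 - θ) = 1 ∧ 1 ≤ Real.tan (π/4 + θ) := by
  obtain ⟨hc0, hcM⟩ := tan_aux θ h0 h1
  have he : Real.tan (π/4 - θ) = (Real.tan (π/4 + θ))⁻¹ := by
    rw [show π/4 - θ = π/2 - (π/4 + θ) by ring, Real.tan_pi_div_two_sub]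
  have ht0 : 0 < Real.tan (π/4 + θ) := by
    rw [he] at hc0; exact inv_pos.mp hc0
  constructor
  · rw [he, mul_inv_cancel₀ (ne_of_gt ht0)]
  · have hc1 : Real.tan (π/4 - θ) ≤ 1 := by nlinarith
    rw [he] at hc1
    have h3 := mul_le_mul_of_nonneg_left hc1 ht0.le
    rw [mul_inv_cancel₀ (ne_of_gt ht0)] at h3
    linarith

lemma spanner_aux (k : ℕ) (hk : 8 < k) (P : Finset ℂ) (r : ℂ → ℝ) :
    ∀ n : ℕ, ∀ u p : ℂ, TEdge P r u p →
      ((P ×ˢ P).filter (fun qp => dist qp.1 qp.2 < dist u p)).card ≤ n →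
      ∃ l : List ℂ, l.Chain' (ThetaEdge k P r) ∧ l.head? = some u ∧
        l.getLast? = some p ∧
        pathLen l ≤ Real.tan (π / 4 + 2 * π / (k : ℝ)) * dist u p := by
  classical
  have hπ := Real.pi_pos
  have hk' : (8:ℝ) < (k:ℝ) := by exact_mod_cast hk
  have hθ0 : 0 < 2*π/(k:ℝ) := by positivity
  have hθ1 : 2*π/(k:ℝ) < π/4 := by
    rw [div_lt_iff₀ (by positivity)]; nlinarith
  obtain ⟨hprod, ht1⟩ := tan_facts (2*π/(k:ℝ)) hθ0 hθ1
  intro n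
  induction n using Nat.strong_induction_on with
  | _ n ih =>
  intro u p hup hcard
  obtain ⟨huP, hpP, hupne, hur⟩ := hup
  set S := P.filter (fun q => TEdge P r q p ∧ coneIdx k (q - p) = coneIdx k (u - p)) with hS
  have huS : u ∈ S := Finset.mem_filter.mpr ⟨huP, ⟨huP, hpP, hupne, hur⟩, rfl⟩
  obtain ⟨v, hvS, hvmin⟩ := Finset.exists_min_image S (dF k p) ⟨u, huS⟩
  have hvmem := Finset.mem_filter.mp hvS
  have hvT : TEdge P r v p := hvmem.2.1
  have hvcone : coneIdx k (v - p) = coneIdx k (u - p) := hvmem.2.2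
  have hθv : ThetaEdge k P r v p :=
    ⟨hvT, fun q hq hcq => hvmin q (Finset.mem_filter.mpr ⟨hq.1, hq, by rw [hcq, hvcone]⟩)⟩
  by_cases hvu : v = u
  · refine ⟨[u, p], ?_, rfl, rfl, ?_⟩
    · exact List.isChain_pair.mpr (hvu ▸ hθv)
    · have hpl : pathLen [u, p] = dist u p := by simp [pathLen]
      rw [hpl]
      nlinarith [dist_nonneg (x := u) (y := p)]
  · have hdFvu : dF k p v ≤ dF k p u := hvmin u huS
    have hvpne : v ≠ p := hvT.2.2.1
    have hgeom := step_geom k hk u v p hupne hvpne hvcone hdFvu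
    have htanpos : 0 < Real.tan (π/4 - 2*π/(k:ℝ)) := (tan_aux _ hθ0 hθ1).1
    have hvdist : 0 < dist v p := dist_pos.mpr hvpne
    have hlt : dist u v < dist u p := by nlinarith
    have huv : TEdge P r u v := ⟨huP, hvT.1, fun h => hvu h.symm, le_trans hlt.le hur⟩
    have hsub : (P ×ˢ P).filter (fun qp => dist qp.1 qp.2 < dist u v)
        ⊂ (P ×ˢ P).filter (fun qp => dist qp.1 qp.2 < dist u p) := by
      rw [Finset.ssubset_iff_of_subset]
      · exact ⟨(u, v), Finset.mem_filter.mpr ⟨Finset.mem_product.mpr ⟨huP, hvT.1⟩, hlt⟩,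
          by simp [Finset.mem_filter]⟩
      · intro x hx
        rw [Finset.mem_filter] at hx ⊢
        exact ⟨hx.1, hx.2.trans hlt⟩
    have hmlt : ((P ×ˢ P).filter (fun qp => dist qp.1 qp.2 < dist u v)).card < n :=
      lt_of_lt_of_le (Finset.card_lt_card hsub) hcard
    obtain ⟨l, hchain, hhead, hlast, hlen⟩ := ih _ hmlt u v huv le_rfl
    refine ⟨l ++ [p], ?_, ?_, ?_, ?_⟩
    · apply List.isChain_append.mpr
      refine ⟨hchain, List.isChain_singleton p, ?_⟩
      intro x hx y hy
      rw [hlast] at hx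
      simp at hx hy
      rw [← hx, ← hy]
      exact hθv
    · cases l with
      | nil => simp at hhead
      | cons a l' => simpa using hhead
    · simp [List.getLast?_concat]
    · rw [pathLen_concat p l v hlast]
      have hmul := mul_le_mul_of_nonneg_left hgeom
        (le_trans zero_le_one ht1)
      have hx : Real.tan (π/4 + 2*π/(k:ℝ)) * (Real.tan (π/4 - 2*π/(k:ℝ)) * dist v p)
          = dist v p := by rw [← mul_assoc, hprod, one_mul]
      nlinarith [hlen, hmul, hx]

theorem stmt_4 (k : ℕ) (hk : 8 < k) (P : Finset ℂ) (r : ℂ → ℝ)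
    (hr : ∀ q ∈ P, 0 < r q) :
    ∀ u p : ℂ, TEdge P r u p →
      ∃ l : List ℂ, l.Chain' (ThetaEdge k P r) ∧ l.head? = some u ∧
        l.getLast? = some p ∧
        pathLen l ≤ Real.tan (π / 4 + 2 * π / (k : ℝ)) * dist u p := by
  intro u p hup
  exact spanner_aux k hk P r _ u p hup le_rfl
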